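/- Let π : L⁰ → L̄⁰ be regular (REG) and conditionally evenly quasiconvex (EQC). Then for every x ∈ L⁰, π(x) is the least upper bound, in the a.e. order on L̄⁰, of the family {R(x·x′, x′) : x′ ∈ L⁰}, where R(Y, x′) is the greatest lower bound in the a.e. order of {π(ξ) : ξ ∈ L⁰, ξ·x′ ≥ Y a.s.}. -/

import Mathlib

open MeasureTheory
open scoped Classical

variable {Ω : Type*} [MeasurableSpace Ω]

/-- The countable concatenation property (CSet): for every countable measurable partition
`{A n}` of `Ω` and every sequence `{x n} ⊆ C`, the concatenation `∑ n, 1_{A n} • x n`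
(i.e. the element `z ∈ L⁰` agreeing a.e. with `x n` on each `A n`) belongs to `C`. -/
def CSet (μ : Measure Ω) (C : Set (Ω →ₘ[μ] ℝ)) : Prop :=
  ∀ A : ℕ → Set Ω, (∀ n, MeasurableSet (A n)) → Pairwise (Function.onFun Disjoint A) →
    (⋃ n, A n) = Set.univ →
    ∀ x : ℕ → Ω →ₘ[μ] ℝ, (∀ n, x n ∈ C) →
      ∀ z : Ω →ₘ[μ] ℝ, (∀ n, ∀ᵐ ω ∂μ, ω ∈ A n → z ω = x n ω) → z ∈ C

/-- The countable concatenation hull `C^cc` of `C`. -/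
def ccHull (μ : Measure Ω) (C : Set (Ω →ₘ[μ] ℝ)) : Set (Ω →ₘ[μ] ℝ) :=
  {z | ∃ (A : ℕ → Set Ω) (x : ℕ → Ω →ₘ[μ] ℝ),
    (∀ n, MeasurableSet (A n)) ∧ Pairwise (Function.onFun Disjoint A) ∧
    (⋃ n, A n) = Set.univ ∧ (∀ n, x n ∈ C) ∧
    ∀ n, ∀ᵐ ω ∂μ, ω ∈ A n → z ω = x n ω}

/-- `C 1_A = L⁰ 1_A`: every `x ∈ L⁰` agrees a.e. on `A` with some element of `C`. -/
def FullOn (μ : Measure Ω) (C : Set (Ω →ₘ[μ] ℝ)) (A : Set Ω) : Prop :=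
  ∀ x : Ω →ₘ[μ] ℝ, ∃ ξ ∈ C, ∀ᵐ ω ∂μ, ω ∈ A → x ω = ξ ω

/-- `A` is (a version of) the maximal set `A_C` of the class
`{A ∈ 𝒢 ∣ C 1_A = L⁰ 1_A}`; its complement `Aᶜ` is then `D_C`. -/
def IsMaxFull (μ : Measure Ω) (C : Set (Ω →ₘ[μ] ℝ)) (A : Set Ω) : Prop :=
  MeasurableSet A ∧ FullOn μ C A ∧
    ∀ B : Set Ω, MeasurableSet B → FullOn μ C B → μ (B \ A) = 0

/-- `x` is locally separated from `C` on `H`: for every `B ⊆ H` with `μ B > 0`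
there is no `ξ ∈ C` with `x = ξ` a.e. on `B`.  With `H = D_C` this is the paper's
notion of `x` being outside `C`. -/
def LocOutside (μ : Measure Ω) (C : Set (Ω →ₘ[μ] ℝ)) (x : Ω →ₘ[μ] ℝ) (H : Set Ω) : Prop :=
  ∀ B : Set Ω, MeasurableSet B → B ⊆ H → 0 < μ B →
    ¬ ∃ ξ ∈ C, ∀ᵐ ω ∂μ, ω ∈ B → x ω = ξ ω

/-- `H` is (a version of) the largest measurable set `H_{C,x}` on which `x` is locally
separated from `C`. -/
def IsMaxLocOutside (μ : Measure Ω) (C : Set (Ω →ₘ[μ] ℝ)) (x : Ω →ₘ[μ] ℝ) (H : Set Ω) : Prop :=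
  MeasurableSet H ∧ LocOutside μ C x H ∧
    ∀ B : Set Ω, MeasurableSet B → LocOutside μ C x B → μ (B \ H) = 0

/-- `C ⊆ L⁰` is conditionally evenly convex: there are a family `L ⊆ L⁰` and
`Y_{x'} ∈ L⁰` for each `x' ∈ L` with
`C = ⋂_{x' ∈ L} {x ∣ x·x' < Y_{x'} a.e. on D_C}` (where `D_C = Aᶜ` for the maximal
full set `A = A_C`; the case `L = ∅` gives `C = L⁰`). -/
def CondEvenlyConvex (μ : Measure Ω) (C : Set (Ω →ₘ[μ] ℝ)) : Prop :=
  ∃ A : Set Ω, IsMaxFull μ C A ∧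
    ∃ (L : Set (Ω →ₘ[μ] ℝ)) (Y : (Ω →ₘ[μ] ℝ) → Ω →ₘ[μ] ℝ),
      C = ⋂ x' ∈ L, {x : Ω →ₘ[μ] ℝ | ∀ᵐ ω ∂μ, ω ∈ Aᶜ → x ω * x' ω < Y x' ω}

/-- The polar `C°` of `C` (relative to `D = D_C`). -/
def polarSet (μ : Measure Ω) (C : Set (Ω →ₘ[μ] ℝ)) (D : Set Ω) : Set (Ω →ₘ[μ] ℝ) :=
  {x' | ∀ x ∈ C, ∀ᵐ ω ∂μ, ω ∈ D → x ω * x' ω < 1}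

/-- The bipolar `C°°` of `C` (relative to `D = D_C`). -/
def bipolarSet (μ : Measure Ω) (C : Set (Ω →ₘ[μ] ℝ)) (D : Set Ω) : Set (Ω →ₘ[μ] ℝ) :=
  {x | ∀ x' ∈ polarSet μ C D, ∀ᵐ ω ∂μ, ω ∈ D → x ω * x' ω < 1}


/-- `f ≤ g` almost everywhere (the a.e. order on `L̄⁰`). -/
def AELE (μ : Measure Ω) (f g : Ω → EReal) : Prop := ∀ᵐ ω ∂μ, f ω ≤ g ω

/-- `g` is the greatest lower bound, in the a.e. order, of the family `S ⊆ L̄⁰`.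
(For `S = ∅` this forces `g = +∞` a.e., which is the paper's convention.) -/
def IsAEGLB (μ : Measure Ω) (S : Set (Ω → EReal)) (g : Ω → EReal) : Prop :=
  (∀ f ∈ S, AELE μ g f) ∧ ∀ h : Ω → EReal, (∀ f ∈ S, AELE μ h f) → AELE μ h g

/-- `g` is the least upper bound, in the a.e. order, of the family `S ⊆ L̄⁰`. -/
def IsAELUB (μ : Measure Ω) (S : Set (Ω → EReal)) (g : Ω → EReal) : Prop :=
  (∀ f ∈ S, AELE μ f g) ∧ ∀ h : Ω → EReal, (∀ f ∈ S, AELE μ f h) → AELE μ g h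

/-- Regularity (REG): `π (x·1_A + y·1_{Aᶜ}) = π x · 1_A + π y · 1_{Aᶜ}` for all
`x, y ∈ L⁰` and measurable `A`, expressed via an arbitrary representative `z` of
`x·1_A + y·1_{Aᶜ}`. -/
def Reg (μ : Measure Ω) (π : (Ω →ₘ[μ] ℝ) → Ω → EReal) : Prop :=
  ∀ (x y : Ω →ₘ[μ] ℝ) (A : Set Ω), MeasurableSet A →
    ∀ z : Ω →ₘ[μ] ℝ, (∀ᵐ ω ∂μ, z ω = if ω ∈ A then x ω else y ω) →
      ∀ᵐ ω ∂μ, π z ω = if ω ∈ A then π x ω else π y ω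

/-- `U` is (a version of) the maximal set `Υ_π` on which `π ≡ +∞`; its complement
is `T_π`. -/
def IsMaxInfty (μ : Measure Ω) (π : (Ω →ₘ[μ] ℝ) → Ω → EReal) (U : Set Ω) : Prop :=
  MeasurableSet U ∧ (∀ ξ : Ω →ₘ[μ] ℝ, ∀ᵐ ω ∂μ, ω ∈ U → π ξ ω = ⊤) ∧
    ∀ B : Set Ω, MeasurableSet B → (∀ ξ : Ω →ₘ[μ] ℝ, ∀ᵐ ω ∂μ, ω ∈ B → π ξ ω = ⊤) →
      μ (B \ U) = 0

/-- The lower level set `U_Y = {ξ ∈ L⁰ ∣ π(ξ)·1_T ≤ Y}` (with the convention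
`(+∞)·0 = 0` off `T`). -/
def levelSet (μ : Measure Ω) (π : (Ω →ₘ[μ] ℝ) → Ω → EReal) (T : Set Ω)
    (Y : Ω →ₘ[μ] ℝ) : Set (Ω →ₘ[μ] ℝ) :=
  {ξ | ∀ᵐ ω ∂μ, (if ω ∈ T then π ξ ω else 0) ≤ (Y ω : EReal)}

/-- `S ⊆ L⁰` is `L⁰`-convex. -/
def L0Convex (μ : Measure Ω) (S : Set (Ω →ₘ[μ] ℝ)) : Prop :=
  ∀ x ∈ S, ∀ y ∈ S, ∀ Λ : Ω →ₘ[μ] ℝ, (∀ᵐ ω ∂μ, 0 ≤ Λ ω ∧ Λ ω ≤ 1) →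
    Λ * x + (1 - Λ) * y ∈ S

/-- The family `{π ξ ∣ ξ ∈ L⁰, ξ·x' ≥ Y a.s.}` whose a.e.-greatest lower bound
is `R(Y, x')`. -/
def RFamily (μ : Measure Ω) (π : (Ω →ₘ[μ] ℝ) → Ω → EReal) (Y x' : Ω →ₘ[μ] ℝ) :
    Set (Ω → EReal) :=
  {g | ∃ ξ : Ω →ₘ[μ] ℝ, (∀ᵐ ω ∂μ, Y ω ≤ ξ ω * x' ω) ∧ g = π ξ}


/-- Exhaustion lemma: if every positive-measure measurable subset of `B` meets some `S i`
in positive measure, then countably many `S i` cover `B` up to a null set. -/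
lemma my_exhaustion {Ω : Type*} [MeasurableSpace Ω] (μ : Measure Ω) [IsFiniteMeasure μ]
    {B : Set Ω} (hB : MeasurableSet B) {ι : Type*} [Nonempty ι]
    (S : ι → Set Ω) (hS : ∀ i, MeasurableSet (S i))
    (hsep : ∀ F : Set Ω, MeasurableSet F → F ⊆ B → 0 < μ F → ∃ i, 0 < μ (F ∩ S i)) :
    ∃ f : ℕ → ι, μ (B \ ⋃ n, S (f n)) = 0 := by
  set 𝒜 : Set ENNReal := Set.range (fun f : ℕ → ι => μ (B ∩ ⋃ n, S (f n))) with h𝒜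
  obtain ⟨u, -, hutend, humem⟩ := exists_seq_tendsto_sSup
    (Set.range_nonempty _) (OrderTop.bddAbove 𝒜)
  choose fs hfs using humem
  set g : ℕ → ι := fun n => fs n.unpair.1 n.unpair.2 with hg
  set T : Set Ω := ⋃ n, S (g n) with hT
  have hTmeas : MeasurableSet T := MeasurableSet.iUnion fun n => hS _
  have hsub : ∀ k, (⋃ n, S (fs k n)) ⊆ T := by
    intro k
    refine Set.iUnion_subset fun n => ?_
    have he : S (fs k n) = S (g (Nat.pair k n)) := by
      simp [hg, Nat.unpair_pair]
    rw [he, hT]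
    exact Set.subset_iUnion (fun m => S (g m)) _
  have hle : sSup 𝒜 ≤ μ (B ∩ T) := by
    refine le_of_tendsto' hutend fun k => ?_
    rw [← hfs k]
    exact measure_mono (Set.inter_subset_inter_right _ (hsub k))
  refine ⟨g, ?_⟩
  by_contra hne
  have hpos : 0 < μ (B \ T) := pos_iff_ne_zero.mpr hne
  obtain ⟨i, hi⟩ := hsep (B \ T) (hB.diff hTmeas) Set.diff_subset hpos
  set g' : ℕ → ι := fun n => Nat.casesOn n i g with hg'
  have hTg' : (⋃ n, S (g' n)) = S i ∪ T := by
    ext ω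
    simp only [Set.mem_iUnion, Set.mem_union, hT]
    constructor
    · rintro ⟨n, hn⟩
      cases n with
      | zero => exact Or.inl hn
      | succ m => exact Or.inr ⟨m, hn⟩
    · rintro (hω | ⟨m, hm⟩)
      · exact ⟨0, hω⟩
      · exact ⟨m + 1, hm⟩
  have hbig : μ (B ∩ T) + μ ((B \ T) ∩ S i) ≤ μ (B ∩ (S i ∪ T)) := by
    rw [← measure_union ?_ ((hB.diff hTmeas).inter (hS i))]
    · refine measure_mono ?_
      rintro ω (⟨h1, h2⟩ | ⟨⟨h1, -⟩, h3⟩)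
      · exact ⟨h1, Or.inr h2⟩
      · exact ⟨h1, Or.inl h3⟩
    · refine Set.disjoint_left.mpr ?_
      rintro ω ⟨-, h2⟩ ⟨⟨-, h4⟩, -⟩
      exact h4 h2
  have hlt : sSup 𝒜 < μ (B ∩ (S i ∪ T)) := by
    calc sSup 𝒜 ≤ μ (B ∩ T) := hle
    _ < μ (B ∩ T) + μ ((B \ T) ∩ S i) :=
        ENNReal.lt_add_right (measure_ne_top μ _) (pos_iff_ne_zero.mp hi)
    _ ≤ _ := hbig
  have hmem2 : μ (B ∩ (S i ∪ T)) ≤ sSup 𝒜 := by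
    rw [← hTg']
    exact le_sSup ⟨g', rfl⟩
  exact absurd (hlt.trans_le hmem2) (lt_irrefl _)

/-- **Dual representation of conditionally evenly quasiconvex maps.**
Let `π : L⁰ → L̄⁰` be regular (REG) and conditionally evenly quasiconvex (EQC).
Then for every `x ∈ L⁰`, `π x` is the least upper bound, in the a.e. order, of
the family `{R(x·x', x') ∣ x' ∈ L⁰}`, where `R(Y, x')` is the a.e.-greatest
lower bound of `{π ξ ∣ ξ ∈ L⁰, ξ·x' ≥ Y a.s.}`. -/
theorem stmt5 (μ : Measure Ω) [IsProbabilityMeasure μ]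
    (π : (Ω →ₘ[μ] ℝ) → Ω → EReal)
    (hmeas : ∀ ξ : Ω →ₘ[μ] ℝ, Measurable (π ξ))
    (hnbot : ∀ ξ : Ω →ₘ[μ] ℝ, ∀ᵐ ω ∂μ, π ξ ω ≠ ⊥)
    (hreg : Reg μ π)
    (U : Set Ω) (hU : IsMaxInfty μ π U)
    (hEQC : ∀ Y : Ω →ₘ[μ] ℝ, CondEvenlyConvex μ (levelSet μ π Uᶜ Y))
    (R : (Ω →ₘ[μ] ℝ) → (Ω →ₘ[μ] ℝ) → Ω → EReal)
    (hRmeas : ∀ Y x' : Ω →ₘ[μ] ℝ, Measurable (R Y x'))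
    (hR : ∀ Y x' : Ω →ₘ[μ] ℝ, IsAEGLB μ (RFamily μ π Y x') (R Y x'))
    (x : Ω →ₘ[μ] ℝ) :
    IsAELUB μ {g : Ω → EReal | ∃ x' : Ω →ₘ[μ] ℝ, g = R (x * x') x'} (π x) := by
  obtain ⟨hUmeas, hUtop, -⟩ := hU
  constructor
  · rintro g ⟨x', rfl⟩
    have hx : π x ∈ RFamily μ π (x * x') x' := by
      refine ⟨x, ?_, rfl⟩
      filter_upwards [AEEqFun.coeFn_mul x x'] with ω hω
      rw [hω]; rfl
    exact (hR (x * x') x').1 _ hx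
  · intro h hub
    -- Step A : on U, h = ⊤
    have stepA : ∀ᵐ ω ∂μ, ω ∈ U → (⊤ : EReal) ≤ h ω := by
      have hlb : ∀ f ∈ RFamily μ π (x * (0 : Ω →ₘ[μ] ℝ)) 0,
          AELE μ (fun ω => if ω ∈ U then (⊤ : EReal) else ⊥) f := by
        rintro f ⟨ξ, -, rfl⟩
        filter_upwards [hUtop ξ] with ω hω
        by_cases hmem : ω ∈ U
        · simp only [if_pos hmem, hω hmem, le_refl]
        · simp only [if_neg hmem]; exact bot_le
      have h1 : AELE μ (fun ω => if ω ∈ U then (⊤ : EReal) else ⊥) (R (x * 0) 0) :=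
        (hR (x * 0) 0).2 _ hlb
      have h2 : AELE μ (R (x * 0) 0) h := hub _ ⟨0, rfl⟩
      filter_upwards [h1, h2] with ω hw1 hw2 hmem
      have hw1' : (if ω ∈ U then (⊤ : EReal) else ⊥) ≤ R (x * 0) 0 ω := hw1
      rw [if_pos hmem] at hw1'
      exact le_trans hw1' hw2
    -- Step B : for each rational q
    have key : ∀ q : ℚ, ∀ᵐ ω ∂μ,
        (ω ∈ Uᶜ ∧ ((q : ℝ) : EReal) < π x ω) → ((q : ℝ) : EReal) ≤ h ω := by
      intro q
      set Yq : Ω →ₘ[μ] ℝ :=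
        AEEqFun.mk (Set.indicator Uᶜ (fun _ => (q : ℝ)))
          ((measurable_const.indicator hUmeas.compl).aestronglyMeasurable) with hYqdef
      have hYqcoe : ⇑Yq =ᵐ[μ] Set.indicator Uᶜ (fun _ => (q : ℝ)) := by
        rw [hYqdef]; exact AEEqFun.coeFn_mk _ _
      have hCmem : ∀ ξ : Ω →ₘ[μ] ℝ, ξ ∈ levelSet μ π Uᶜ Yq ↔
          ∀ᵐ ω ∂μ, ω ∈ Uᶜ → π ξ ω ≤ ((q : ℝ) : EReal) := by
        intro ξ
        constructor
        · intro hmem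
          simp only [levelSet, Set.mem_setOf_eq] at hmem
          filter_upwards [hmem, hYqcoe] with ω h1 h2 hUc
          rw [if_pos hUc] at h1
          rwa [h2, Set.indicator_of_mem hUc] at h1
        · intro hmem
          simp only [levelSet, Set.mem_setOf_eq]
          filter_upwards [hmem, hYqcoe] with ω h1 h2
          by_cases hUc : ω ∈ Uᶜ
          · rw [if_pos hUc, h2, Set.indicator_of_mem hUc]
            exact h1 hUc
          · rw [if_neg hUc, h2, Set.indicator_of_notMem hUc]
            simp
      obtain ⟨A, ⟨hAmeas, hAfull, -⟩, L, Yf, hrep⟩ := hEQC Yq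
      obtain ⟨ξ₀, hξ₀C, hξ₀A⟩ := hAfull x
      have hregA : ∀ᵐ ω ∂μ, π x ω = if ω ∈ A then π ξ₀ ω else π x ω := by
        refine hreg ξ₀ x A hAmeas x ?_
        filter_upwards [hξ₀A] with ω hω
        by_cases hmem : ω ∈ A
        · rw [if_pos hmem]; exact hω hmem
        · rw [if_neg hmem]
      have hq1 : ∀ᵐ ω ∂μ, ω ∈ A → ω ∈ Uᶜ → π x ω ≤ ((q : ℝ) : EReal) := by
        filter_upwards [hregA, (hCmem ξ₀).mp hξ₀C] with ω h1 h2 hA hUc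
        rw [h1, if_pos hA]; exact h2 hUc
      set B : Set Ω := Aᶜ ∩ (Uᶜ ∩ {ω | ((q : ℝ) : EReal) < π x ω}) with hBdef
      have hBmeas : MeasurableSet B :=
        hAmeas.compl.inter (hUmeas.compl.inter
          (measurableSet_lt measurable_const (hmeas x)))
      have claimB : ∀ᵐ ω ∂μ, ω ∈ B → ((q : ℝ) : EReal) ≤ h ω := by
        by_cases hBz : μ B = 0
        · filter_upwards [measure_eq_zero_iff_ae_notMem.mp hBz] with ω hω hmem
          exact absurd hmem hω
        · -- the separating sets
          set S : L → Set Ω :=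
            fun p => {ω | Yf (p : Ω →ₘ[μ] ℝ) ω ≤ x ω * (p : Ω →ₘ[μ] ℝ) ω} with hSdef
          have hSmeas : ∀ p : L, MeasurableSet (S p) := by
            intro p
            exact measurableSet_le (Yf _).stronglyMeasurable.measurable
              (x.stronglyMeasurable.measurable.mul
                ((p : Ω →ₘ[μ] ℝ)).stronglyMeasurable.measurable)
          have hsep : ∀ F : Set Ω, MeasurableSet F → F ⊆ B → 0 < μ F →
              ∃ p : L, 0 < μ (F ∩ S p) := by
            intro F hF hFB hFpos
            by_contra hcon
            push_neg at hcon
            have hcon' : ∀ x' ∈ L, ∀ᵐ ω ∂μ,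
                ω ∈ F → ¬ (Yf x' ω ≤ x ω * x' ω) := by
              intro x' hx'
              have hz : μ (F ∩ S ⟨x', hx'⟩) = 0 :=
                le_antisymm (hcon ⟨x', hx'⟩) zero_le
              filter_upwards [measure_eq_zero_iff_ae_notMem.mp hz] with ω hω hF2 hS2
              exact hω ⟨hF2, hS2⟩
            set ζ : Ω →ₘ[μ] ℝ := AEEqFun.mk (F.piecewise ⇑x ⇑ξ₀)
              ((Measurable.piecewise hF x.stronglyMeasurable.measurable
                ξ₀.stronglyMeasurable.measurable).aestronglyMeasurable) with hζdef
            have hζ : ∀ᵐ ω ∂μ, ζ ω = if ω ∈ F then x ω else ξ₀ ω := by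
              have hcm := AEEqFun.coeFn_mk (μ := μ) (F.piecewise ⇑x ⇑ξ₀)
                ((Measurable.piecewise hF x.stronglyMeasurable.measurable
                  ξ₀.stronglyMeasurable.measurable).aestronglyMeasurable)
              rw [← hζdef] at hcm
              filter_upwards [hcm] with ω hω
              rw [hω]
              by_cases hmem : ω ∈ F
              · rw [Set.piecewise_eq_of_mem _ _ _ hmem, if_pos hmem]
              · rw [Set.piecewise_eq_of_notMem _ _ _ hmem, if_neg hmem]
            have hζC : ζ ∈ levelSet μ π Uᶜ Yq := by
              rw [hrep]
              refine Set.mem_iInter₂.mpr fun x' hx' => ?_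
              rw [Set.mem_setOf_eq]
              have hξ₀rep : ∀ᵐ ω ∂μ, ω ∈ Aᶜ → ξ₀ ω * x' ω < Yf x' ω := by
                have h5 := hξ₀C
                rw [hrep] at h5
                have h6 := Set.mem_iInter₂.mp h5 x' hx'
                rwa [Set.mem_setOf_eq] at h6
              filter_upwards [hζ, hcon' x' hx', hξ₀rep] with ω h1 h2 h3 hAc
              by_cases hmem : ω ∈ F
              · rw [h1, if_pos hmem]; exact lt_of_not_ge (h2 hmem)
              · rw [h1, if_neg hmem]; exact h3 hAc
            have hregζ := hreg x ξ₀ F hF ζ hζ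
            have hFnull : ∀ᵐ ω ∂μ, ω ∉ F := by
              filter_upwards [(hCmem ζ).mp hζC, hregζ] with ω h1 h2 hmem
              obtain ⟨-, hUc, hlt⟩ := hFB hmem
              have h3 := h1 hUc
              rw [h2, if_pos hmem] at h3
              exact absurd h3 (not_le.mpr hlt)
            exact absurd (measure_eq_zero_iff_ae_notMem.mpr hFnull) (pos_iff_ne_zero.mp hFpos)
          have hBpos : 0 < μ B := pos_iff_ne_zero.mpr hBz
          obtain ⟨p₀, -⟩ := hsep B hBmeas (fun _ hh => hh) hBpos
          haveI : Nonempty L := ⟨p₀⟩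
          obtain ⟨f, hf⟩ := my_exhaustion μ hBmeas S hSmeas hsep
          set T : Set Ω := ⋃ n, S (f n) with hTdef
          have hTmeas : MeasurableSet T := MeasurableSet.iUnion fun n => hSmeas (f n)
          have ptot : ∀ ω, ∃ n, ω ∈ S (f n) ∨ ω ∉ B ∩ T := by
            intro ω
            by_cases hmem : ω ∈ B ∩ T
            · obtain ⟨n, hn⟩ := Set.mem_iUnion.mp hmem.2
              exact ⟨n, Or.inl hn⟩
            · exact ⟨0, Or.inr hmem⟩
          have hpm : ∀ n, MeasurableSet {ω | ω ∈ S (f n) ∨ ω ∉ B ∩ T} := fun n =>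
            (hSmeas (f n)).union (hBmeas.inter hTmeas).compl
          have hx''meas : Measurable
              (fun ω => ((f (Nat.find (ptot ω)) : Ω →ₘ[μ] ℝ) : Ω → ℝ) ω) := by
            exact Measurable.find
              (fun n => ((f n : Ω →ₘ[μ] ℝ)).stronglyMeasurable.measurable) hpm ptot
          set x'' : Ω →ₘ[μ] ℝ := AEEqFun.mk _ hx''meas.aestronglyMeasurable with hx''def
          have hx''coe : ⇑x'' =ᵐ[μ]
              (fun ω => ((f (Nat.find (ptot ω)) : Ω →ₘ[μ] ℝ) : Ω → ℝ) ω) := by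
            rw [hx''def]; exact AEEqFun.coeFn_mk _ _
          -- the partition pieces of T
          set E : ℕ → Set Ω :=
            fun n => S (f n) \ ⋃ m, ⋃ (_ : m < n), S (f m) with hEdef
          have hEmeas : ∀ n, MeasurableSet (E n) := fun n =>
            (hSmeas (f n)).diff
              (MeasurableSet.iUnion fun m => MeasurableSet.iUnion fun _ => hSmeas (f m))
          have hEfind : ∀ ω, ω ∈ B ∩ T → ∀ n, ω ∈ E n → Nat.find (ptot ω) = n := by
            intro ω hBT n hE
            rw [Nat.find_eq_iff]
            refine ⟨Or.inl hE.1, fun m hm => ?_⟩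
            rintro (hS2 | hnot)
            · exact hE.2 (Set.mem_iUnion₂.mpr ⟨m, hm, hS2⟩)
            · exact hnot hBT
          have hEcover : ∀ ω, ω ∈ T → ∃ n, ω ∈ E n := by
            intro ω hT
            have hex : ∃ n, ω ∈ S (f n) := Set.mem_iUnion.mp hT
            refine ⟨Nat.find hex, Nat.find_spec hex, ?_⟩
            intro hmem
            obtain ⟨m, hm, hS2⟩ := Set.mem_iUnion₂.mp hmem
            exact absurd hS2 (Nat.find_min hex hm)
          -- the key lower bound for the family of x''
          have hkey : ∀ ξ : Ω →ₘ[μ] ℝ, (∀ᵐ ω ∂μ, (x * x'') ω ≤ ξ ω * x'' ω) →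
              ∀ᵐ ω ∂μ, ω ∈ B ∩ T → ((q : ℝ) : EReal) ≤ π ξ ω := by
            intro ξ hξ
            have hchain : ∀ᵐ ω ∂μ, ∀ n, ω ∈ B ∩ T → ω ∈ E n →
                Yf (f n : Ω →ₘ[μ] ℝ) ω ≤ ξ ω * ((f n : Ω →ₘ[μ] ℝ) : Ω → ℝ) ω := by
              filter_upwards [hξ, AEEqFun.coeFn_mul x x'', hx''coe] with ω h1 h2 h3 n hmem hE
              have hfind : Nat.find (ptot ω) = n := hEfind ω hmem n hE
              have e3 : x'' ω = ((f n : Ω →ₘ[μ] ℝ) : Ω → ℝ) ω := by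
                rw [h3]; show ((f (Nat.find (ptot ω)) : Ω →ₘ[μ] ℝ) : Ω → ℝ) ω = _
                rw [hfind]
              have hS2 : ω ∈ S (f n) := hE.1
              calc Yf (f n : Ω →ₘ[μ] ℝ) ω
                  ≤ x ω * ((f n : Ω →ₘ[μ] ℝ) : Ω → ℝ) ω := hS2
                _ = (x * x'') ω := by rw [h2]; show _ = x ω * x'' ω; rw [e3]
                _ ≤ ξ ω * x'' ω := h1
                _ = ξ ω * ((f n : Ω →ₘ[μ] ℝ) : Ω → ℝ) ω := by rw [e3]
            set D' : Set Ω := (B ∩ T) ∩ {ω | π ξ ω < ((q : ℝ) : EReal)} with hD'def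
            have hD'meas : MeasurableSet D' :=
              (hBmeas.inter hTmeas).inter (measurableSet_lt (hmeas ξ) measurable_const)
            have hD'z : μ D' = 0 := by
              by_contra hpos
              have hex : ∃ n, μ (D' ∩ E n) ≠ 0 := by
                by_contra hall
                push_neg at hall
                have hcov : D' ⊆ ⋃ n, D' ∩ E n := by
                  intro ω hω
                  obtain ⟨n, hn⟩ := hEcover ω hω.1.2
                  exact Set.mem_iUnion.mpr ⟨n, hω, hn⟩
                have hle2 : μ D' ≤ ∑' n, μ (D' ∩ E n) :=
                  (measure_mono hcov).trans (measure_iUnion_le _)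
                rw [ENNReal.summable.tsum_eq_zero_iff.mpr hall] at hle2
                exact hpos (le_antisymm hle2 zero_le)
              obtain ⟨n, hn⟩ := hex
              obtain ⟨G, hGdef⟩ : ∃ G : Set Ω, G = D' ∩ E n := ⟨_, rfl⟩
              have hGmeas : MeasurableSet G := by
                rw [hGdef]; exact hD'meas.inter (hEmeas n)
              have hGn : μ G ≠ 0 := by rw [hGdef]; exact hn
              set ζ : Ω →ₘ[μ] ℝ := AEEqFun.mk (G.piecewise ⇑ξ ⇑ξ₀)
                ((Measurable.piecewise hGmeas ξ.stronglyMeasurable.measurable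
                  ξ₀.stronglyMeasurable.measurable).aestronglyMeasurable) with hζdef
              have hζ : ∀ᵐ ω ∂μ, ζ ω = if ω ∈ G then ξ ω else ξ₀ ω := by
                have hcm := AEEqFun.coeFn_mk (μ := μ) (G.piecewise ⇑ξ ⇑ξ₀)
                  ((Measurable.piecewise hGmeas ξ.stronglyMeasurable.measurable
                    ξ₀.stronglyMeasurable.measurable).aestronglyMeasurable)
                rw [← hζdef] at hcm
                filter_upwards [hcm] with ω hω
                rw [hω]
                by_cases hmem : ω ∈ G
                · rw [Set.piecewise_eq_of_mem _ _ _ hmem, if_pos hmem]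
                · rw [Set.piecewise_eq_of_notMem _ _ _ hmem, if_neg hmem]
              have hregζ := hreg ξ ξ₀ G hGmeas ζ hζ
              have hζC : ζ ∈ levelSet μ π Uᶜ Yq := by
                refine (hCmem ζ).mpr ?_
                filter_upwards [hregζ, (hCmem ξ₀).mp hξ₀C] with ω h1 h2 hUc
                rw [h1]
                by_cases hmem : ω ∈ G
                · rw [if_pos hmem]
                  have hmem' : ω ∈ D' ∩ E n := hGdef ▸ hmem
                  exact le_of_lt hmem'.1.2
                · rw [if_neg hmem]; exact h2 hUc
              have hrepζ : ∀ᵐ ω ∂μ, ω ∈ Aᶜ →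
                  ζ ω * ((f n : Ω →ₘ[μ] ℝ) : Ω → ℝ) ω < Yf (f n : Ω →ₘ[μ] ℝ) ω := by
                have h5 := hζC
                rw [hrep] at h5
                have h6 := Set.mem_iInter₂.mp h5 _ (f n).2
                rwa [Set.mem_setOf_eq] at h6
              have hGnull : ∀ᵐ ω ∂μ, ω ∉ G := by
                filter_upwards [hrepζ, hζ, hchain] with ω h1 h2 h3 hmem
                have hmem' : ω ∈ D' ∩ E n := hGdef ▸ hmem
                have hBT : ω ∈ B ∩ T := hmem'.1.1
                have hAc : ω ∈ Aᶜ := hBT.1.1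
                have h4 := h3 n hBT hmem'.2
                have h5 := h1 hAc
                rw [h2, if_pos hmem] at h5
                exact absurd h4 (not_le.mpr h5)
              exact hGn (measure_eq_zero_iff_ae_notMem.mpr hGnull)
            filter_upwards [measure_eq_zero_iff_ae_notMem.mp hD'z] with ω hω hmem
            by_contra hlt
            exact hω ⟨hmem, not_le.mp hlt⟩
          -- conclude claimB
          have hlbq : ∀ g ∈ RFamily μ π (x * x'') x'',
              AELE μ (fun ω => if ω ∈ B ∩ T then ((q : ℝ) : EReal) else ⊥) g := by
            rintro g ⟨ξ, hξ2, rfl⟩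
            filter_upwards [hkey ξ hξ2] with ω h1
            by_cases hmem : ω ∈ B ∩ T
            · have e : (if ω ∈ B ∩ T then ((q : ℝ) : EReal) else ⊥) = ((q : ℝ) : EReal) :=
                if_pos hmem
              rw [e]; exact h1 hmem
            · have e : (if ω ∈ B ∩ T then ((q : ℝ) : EReal) else ⊥) = (⊥ : EReal) :=
                if_neg hmem
              rw [e]; exact bot_le
          have h1 := (hR (x * x'') x'').2 _ hlbq
          have h2 := hub _ ⟨x'', rfl⟩
          filter_upwards [h1, h2, measure_eq_zero_iff_ae_notMem.mp hf] with ω hw1 hw2 hw3 hmem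
          have hT : ω ∈ T := by
            by_contra hT
            exact hw3 ⟨hmem, hT⟩
          have hw1' : (if ω ∈ B ∩ T then ((q : ℝ) : EReal) else ⊥) ≤
              R (x * x'') x'' ω := hw1
          rw [if_pos (Set.mem_inter hmem hT)] at hw1'
          exact le_trans hw1' hw2
      filter_upwards [hq1, claimB] with ω h1 h2 hw
      obtain ⟨hUc, hlt⟩ := hw
      by_cases hA : ω ∈ A
      · exact absurd (h1 hA hUc) (not_le.mpr hlt)
      · exact h2 ⟨hA, hUc, hlt⟩
    have hall : ∀ᵐ ω ∂μ, ∀ q : ℚ,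
        (ω ∈ Uᶜ ∧ ((q : ℝ) : EReal) < π x ω) → ((q : ℝ) : EReal) ≤ h ω :=
      ae_all_iff.mpr key
    filter_upwards [hall, stepA] with ω h1 h2
    by_cases hUmem : ω ∈ U
    · exact le_trans le_top (h2 hUmem)
    · by_contra hlt
      push_neg at hlt
      obtain ⟨r, hr1, hr2⟩ := EReal.exists_rat_btwn_of_lt hlt
      exact absurd (h1 r ⟨hUmem, hr2⟩) (not_le.mpr hr1)
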